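/- Let K be a field of characteristic 0 whose maximal abelian subextension over ℚ is finite, and let λ be the number of roots of unity in K. For every positive integer n, the group cohomology H¹(Gal(K(ζₙ)/K), μₙ) is killed by λ (i.e., every element has order dividing λ). -/

import Mathlib

set_option synthInstance.maxHeartbeats 1000000
set_option maxHeartbeats 1000000
noncomputable section

/-- The homomorphism from the Galois group `L ≃ₐ[K] L` to the automorphisms of the group of
`n`-th roots of unity of `L`. -/
def galToMulAutRoots (K L : Type*) [Field K] [Field L] [Algebra K L] (n : ℕ) :
    (L ≃ₐ[K] L) →* MulAut (rootsOfUnity n L) where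
  toFun σ := MulEquiv.restrictRootsOfUnity (σ : L ≃* L) n
  map_one' := by
    ext ζ
    rfl
  map_mul' σ τ := by
    ext ζ
    rfl

/-- The natural action of the Galois group `L ≃ₐ[K] L` on the group of `n`-th roots of
unity of `L`. -/
instance galRootsAction (K L : Type*) [Field K] [Field L] [Algebra K L] (n : ℕ) :
    MulDistribMulAction (L ≃ₐ[K] L) (rootsOfUnity n L) :=
  MulDistribMulAction.compHom _ (galToMulAutRoots K L n)

/-- The maximal abelian subextension of `K/ℚ`. -/
def maxAb (K : Type*) [Field K] [CharZero K] : IntermediateField ℚ K :=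
  ⨆ F ∈ {F : IntermediateField ℚ K |
      IsGalois ℚ ↥F ∧ ∀ σ τ : ↥F ≃ₐ[ℚ] ↥F, σ * τ = τ * σ}, F

/-- The number of roots of unity contained in a field `F`. -/
def numRootsOfUnity (F : Type*) [Field F] : ℕ :=
  Nat.card (CommGroup.torsion Fˣ)

open Polynomial IntermediateField groupCohomology in
/-- Let `K` be a field of characteristic 0 whose maximal abelian subextension over `ℚ` is
finite, and let `λ` be the number of roots of unity in `K`. For every positive integer `n`,
the group cohomology `H¹(Gal(K(ζₙ)/K), μₙ)` is killed by `λ`. -/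
theorem stmt_8 (K Ω : Type) [Field K] [CharZero K] [Field Ω] [Algebra K Ω]
    [IsAlgClosed Ω] [Algebra.IsAlgebraic K Ω]
    (hfin : FiniteDimensional ℚ ↥(maxAb K)) (n : ℕ) (hn : 0 < n)
    (L : IntermediateField K Ω) (hL : L = IntermediateField.adjoin K {z : Ω | z ^ n = 1}) :
    ∀ x : groupCohomology.H1
        (Rep.ofMulDistribMulAction (↥L ≃ₐ[K] ↥L) (rootsOfUnity n ↥L)),
      (numRootsOfUnity K : ℤ) • x = 0 := by
  intro x
  haveI : NeZero n := ⟨hn.ne'⟩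
  have hpne : (X ^ n - 1 : K[X]) ≠ 0 := by
    intro h
    have := congrArg (Polynomial.eval 0) h
    simp [zero_pow hn.ne'] at this
  have hsf : IsSplittingField K ↥L (X ^ n - 1 : K[X]) := by
    have hSroot : {z : Ω | z ^ n = 1} = (X ^ n - 1 : K[X]).rootSet Ω := by
      ext z
      simp [Polynomial.mem_rootSet, hpne, sub_eq_zero]
    rw [hL, hSroot]
    exact IntermediateField.adjoin_rootSet_isSplittingField (IsAlgClosed.splits _)
  haveI := hsf
  haveI : FiniteDimensional K ↥L := IsSplittingField.finiteDimensional ↥L (X ^ n - 1 : K[X])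
  -- basic data about the roots of unity in `L`
  haveI : Fintype (rootsOfUnity n ↥L) := Fintype.ofFinite _
  have hm : 0 < Fintype.card (rootsOfUnity n ↥L) := Fintype.card_pos
  set m := Fintype.card (rootsOfUnity n ↥L) with hmdef
  obtain ⟨ζ, hζ⟩ := IsCyclic.exists_generator (α := rootsOfUnity n ↥L)
  have hordζ : orderOf ζ = m := by
    rw [orderOf_eq_card_of_forall_mem_zpowers hζ, Nat.card_eq_fintype_card]
  have hprim : IsPrimitiveRoot (((ζ : (↥L)ˣ) : ↥L)) m := by
    have h := IsPrimitiveRoot.orderOf (((ζ : (↥L)ˣ) : ↥L))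
    rwa [orderOf_units, Subgroup.orderOf_coe, hordζ] at h
  -- `L` is a cyclotomic extension of `K`
  haveI : NeZero m := ⟨hm.ne'⟩
  have hcyc : IsCyclotomicExtension {m} K ↥L := by
    rw [IsCyclotomicExtension.iff_singleton]
    refine ⟨⟨_, hprim⟩, ?_⟩
    intro y
    have hadj : Algebra.adjoin K ((X ^ n - 1 : K[X]).rootSet ↥L) = ⊤ :=
      hsf.adjoin_rootSet
    have hsub : ((X ^ n - 1 : K[X]).rootSet ↥L) ⊆
        {b : ↥L | b ^ ((⟨m, hm⟩ : ℕ+) : ℕ) = 1} := by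
      intro b hb
      have hbn : b ^ n = 1 := by
        have := (Polynomial.mem_rootSet.1 hb).2
        simpa [sub_eq_zero] using this
      have hbu : IsUnit b := by
        apply IsUnit.of_mul_eq_one (a := b) (b ^ (n - 1))
        rw [← pow_succ']
        rwa [Nat.sub_add_cancel hn]
      have hu : hbu.unit ∈ rootsOfUnity n ↥L := by
        rw [mem_rootsOfUnity]
        apply Units.ext
        rw [Units.val_pow_eq_pow_val, IsUnit.unit_spec, Units.val_one]
        exact hbn
      have h1 : (⟨hbu.unit, hu⟩ : rootsOfUnity n ↥L) ^ m = 1 := pow_card_eq_one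
      have := congrArg (fun t : rootsOfUnity n ↥L => ((t : (↥L)ˣ) : ↥L)) h1
      simpa using this
    have h2 := Algebra.adjoin_mono (R := K) hsub
    rw [hadj] at h2
    exact h2 (Algebra.mem_top (R := K))
  haveI := hcyc
  haveI : IsGalois K ↥L := IsCyclotomicExtension.isGalois {m} K ↥L
  have hcomm : ∀ σ τ : (↥L ≃ₐ[K] ↥L), σ * τ = τ * σ := by
    letI := IsCyclotomicExtension.isMulCommutative {m} K (↥L)
    exact fun σ τ => this.is_comm.comm σ τ
  -- every Galois automorphism acts on the roots of unity as a power map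
  have hcex : ∀ g : (↥L ≃ₐ[K] ↥L), ∃ cg : ℤ, ∀ a : rootsOfUnity n ↥L, g • a = a ^ cg := by
    intro g
    obtain ⟨cg, hcg⟩ := MonoidHom.map_cyclic ((galToMulAutRoots K (↥L) n g).toMonoidHom)
    exact ⟨cg, fun a => hcg a⟩
  choose c hc using hcex
  have hρ : ∀ (g : (↥L ≃ₐ[K] ↥L)) (a : Additive (rootsOfUnity n ↥L)),
      (Rep.ofMulDistribMulAction (↥L ≃ₐ[K] ↥L) (rootsOfUnity n ↥L)).ρ g a = (c g : ℤ) • a := by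
    intro g a
    rw [Rep.ofMulDistribMulAction_ρ_apply_apply, hc g, ofMul_zpow]
    rfl
  induction x using H1_induction_on with | h f => ?_
  rw [← map_zsmul, H1π_eq_zero_iff]
  set J : Ideal ℤ :=
    Submodule.comap (LinearMap.toSpanSingleton ℤ (cocycles₁ (Rep.ofMulDistribMulAction (↥L ≃ₐ[K] ↥L) (rootsOfUnity n ↥L))) f) ((coboundaries₁ (Rep.ofMulDistribMulAction (↥L ≃ₐ[K] ↥L) (rootsOfUnity n ↥L))).comap (cocycles₁ (Rep.ofMulDistribMulAction (↥L ≃ₐ[K] ↥L) (rootsOfUnity n ↥L))).subtype) with hJ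
  have hmemJ : ∀ k : ℤ, k ∈ J ↔ k • f ∈ (coboundaries₁ (Rep.ofMulDistribMulAction (↥L ≃ₐ[K] ↥L) (rootsOfUnity n ↥L))).comap (cocycles₁ (Rep.ofMulDistribMulAction (↥L ≃ₐ[K] ↥L) (rootsOfUnity n ↥L))).subtype := fun k => Iff.rfl
  have key : ∀ a : Additive (rootsOfUnity n ↥L), (m : ℤ) • a = 0 := by
    intro a
    have h1 : (Additive.toMul a) ^ (m : ℤ) = 1 := by
      rw [zpow_natCast]
      exact pow_card_eq_one
    have h2 := congrArg Additive.ofMul h1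
    rw [ofMul_zpow] at h2
    simpa using h2
  have hmJ : (m : ℤ) ∈ J := by
    rw [hmemJ]
    have hz : (m : ℤ) • f = 0 := by
      ext g
      exact key (f g)
    rw [hz]
    exact zero_mem _
  have hgJ : ∀ g : (↥L ≃ₐ[K] ↥L), ((c g) - 1 : ℤ) ∈ J := by
    intro g
    rw [hmemJ]
    refine ⟨f g, ?_⟩
    funext h
    show (Rep.ofMulDistribMulAction (↥L ≃ₐ[K] ↥L) (rootsOfUnity n ↥L)).ρ h (f g) - f g = ((c g - 1 : ℤ) • f) h
    have e1 := (mem_cocycles₁_iff (A := Rep.ofMulDistribMulAction (↥L ≃ₐ[K] ↥L) (rootsOfUnity n ↥L)) f).1 f.2 g h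
    have e2 := (mem_cocycles₁_iff (A := Rep.ofMulDistribMulAction (↥L ≃ₐ[K] ↥L) (rootsOfUnity n ↥L)) f).1 f.2 h g
    rw [hcomm g h, e2] at e1
    erw [hρ g] at e1
    erw [hρ h] at e2
    rw [sub_smul, one_smul]
    have hval : ((c g • f - f : (↥L ≃ₐ[K] ↥L) → Additive (rootsOfUnity n ↥L)) h)
        = c g • (f h) - f h := rfl
    rw [hval, sub_eq_sub_iff_add_eq_add]
    exact e1
  haveI : J.IsPrincipal := inferInstance
  set d := Submodule.IsPrincipal.generator J with hd
  have hdvdJ : ∀ k ∈ J, d ∣ k := by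
    intro k hk
    obtain ⟨s, hs⟩ := (Submodule.IsPrincipal.mem_iff_eq_smul_generator J).1 hk
    exact ⟨s, by rw [hs, smul_eq_mul, ← hd]; ring⟩
  set e := d.natAbs with he
  have hedvd_m : e ∣ m := by
    have := hdvdJ _ hmJ
    have h2 := Int.natAbs_dvd_natAbs.2 this
    simpa using h2
  have he_pos : 0 < e := by
    rcases Nat.eq_zero_or_pos e with h | h
    · exfalso
      have : m = 0 := Nat.eq_zero_of_zero_dvd (h ▸ hedvd_m)
      omega
    · exact h
  -- the element of order `e` fixed by the Galois group
  set η := ζ ^ (m / e) with hη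
  have hordη : orderOf η = e := by
    rw [hη, orderOf_pow, hordζ, Nat.gcd_eq_right (Nat.div_dvd_of_dvd hedvd_m),
      Nat.div_div_self hedvd_m hm.ne']
  have hηfix : ∀ g : (↥L ≃ₐ[K] ↥L), g • η = η := by
    intro g
    have hdvd : (e : ℤ) ∣ (c g - 1) := by
      have := hdvdJ _ (hgJ g)
      exact (Int.natAbs_dvd).2 this
    have h1 : η ^ (c g - 1 : ℤ) = 1 := by
      rw [← orderOf_dvd_iff_zpow_eq_one, hordη]
      exact hdvd
    calc g • η = η ^ (c g) := hc g η
      _ = η ^ ((c g - 1) + 1 : ℤ) := by ring_nf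
      _ = η ^ (c g - 1 : ℤ) * η := by rw [zpow_add, zpow_one]
      _ = η := by rw [h1, one_mul]
  -- hence it comes from `K`
  have hwfix : ∀ σ : (↥L ≃ₐ[K] ↥L), σ ((η : (↥L)ˣ) : ↥L) = ((η : (↥L)ˣ) : ↥L) := by
    intro σ
    have := congrArg (fun t : rootsOfUnity n ↥L => ((t : (↥L)ˣ) : ↥L)) (hηfix σ)
    exact this
  have hwbot : ((η : (↥L)ˣ) : ↥L) ∈ (⊥ : IntermediateField K ↥L) := by
    have hfix : IntermediateField.fixingSubgroup (⊥ : IntermediateField K ↥L) = ⊤ := by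
      apply top_le_iff.1
      intro σ _
      rw [IntermediateField.mem_fixingSubgroup_iff]
      rintro y hy
      obtain ⟨k, hk⟩ := IntermediateField.mem_bot.1 hy
      rw [← hk]
      exact σ.commutes k
    have := IsGalois.fixedField_fixingSubgroup (⊥ : IntermediateField K ↥L)
    rw [hfix] at this
    rw [← this]
    exact fun ⟨σ, _⟩ => hwfix σ
  obtain ⟨y, hy⟩ := IntermediateField.mem_bot.1 hwbot
  have hy0 : y ≠ 0 := by
    intro h0
    rw [h0, map_zero] at hy
    exact (η : (↥L)ˣ).ne_zero hy.symm
  set yu := Units.mk0 y hy0 with hyu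
  have hinj : Function.Injective (algebraMap K ↥L) := (algebraMap K ↥L).injective
  have hiter : ∀ k : ℕ, yu ^ k = 1 ↔ η ^ k = 1 := by
    intro k
    constructor
    · intro hk
      have h1 : y ^ k = 1 := by
        have := congrArg Units.val hk
        simpa [hyu] using this
      have h2 : ((η : (↥L)ˣ) : ↥L) ^ k = 1 := by
        rw [← hy, ← map_pow, h1, map_one]
      have h3 : ((η : (↥L)ˣ)) ^ k = 1 := Units.ext (by simpa using h2)
      exact Subtype.ext (by simpa using h3)
    · intro hk
      have h3 : ((η : (↥L)ˣ)) ^ k = 1 := by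
        have := congrArg Subtype.val hk
        simpa using this
      have h2 : ((η : (↥L)ˣ) : ↥L) ^ k = 1 := by
        have := congrArg Units.val h3
        simpa using this
      have h1 : y ^ k = 1 := hinj (by rw [map_pow, hy, map_one]; exact h2)
      exact Units.ext (by simpa [hyu] using h1)
  have hord_yu : orderOf yu = e := by
    rw [orderOf_eq_orderOf_iff.2 hiter, hordη]
  have hyu_t : yu ∈ CommGroup.torsion Kˣ := by
    rw [CommGroup.mem_torsion]
    exact isOfFinOrder_iff_pow_eq_one.2 ⟨e, he_pos, by rw [← hord_yu]; exact pow_orderOf_eq_one yu⟩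
  have he_dvd : e ∣ numRootsOfUnity K := by
    have h1 := orderOf_dvd_natCard (⟨yu, hyu_t⟩ : CommGroup.torsion Kˣ)
    have h2 : orderOf (⟨yu, hyu_t⟩ : CommGroup.torsion Kˣ) = e := by
      rw [← Subgroup.orderOf_coe]
      exact hord_yu
    rw [h2] at h1
    exact h1
  -- conclude
  obtain ⟨t, ht⟩ := he_dvd
  have heJ : (e : ℤ) ∈ J := by
    rcases Int.natAbs_eq d with h | h
    · rw [he, ← h]
      exact Submodule.IsPrincipal.generator_mem J
    · have h2 : ((e : ℤ)) = -d := by rw [he]; omega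
      rw [h2]
      exact neg_mem (Submodule.IsPrincipal.generator_mem J)
  have : (numRootsOfUnity K : ℤ) • f = (t : ℤ) • ((e : ℤ) • f) := by
    rw [← mul_smul, ht]
    push_cast
    ring_nf
  rw [this]
  exact Submodule.smul_mem _ _ ((hmemJ _).1 heJ)

end
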